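/- Let 𝒥 = (J_1,…,J_m) be a cover of I = {1,…,n}, and for each k let P^{J_k} be a Markov kernel on X^n admitting a Wasserstein matrix W^{J_k} that has the Gibbs block structure for J_k; assume condition (A1) with constant λ ∈ [0,1). Let 𝒫 = P^{J_1} ∘ P^{J_2} ∘ ⋯ ∘ P^{J_m} (the composite kernel applying P^{J_1} first) and 𝒲 = W^{J_m}·W^{J_{m−1}}⋯W^{J_1}. Then for any two probability measures μ, ν on X^n, any coupling Ψ of μ and ν, any bounded measurable f : X^n → ℝ, and any integer k ≥ 1: |∫ 𝒫^k f dμ − ∫ 𝒫^k f dν| ≤ ‖𝒲‖_∞ · λ^{k−1} · max_{j∈I} Ψ({(x,z) : x_j ≠ z_j}) · Σ_{i∈I} osc_i(f). -/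

import Mathlib

open MeasureTheory ProbabilityTheory Finset
open scoped ENNReal

/-- Oscillation of `f` with respect to the `i`-th coordinate. -/
noncomputable def osc {n : ℕ} {X : Type*} (i : Fin n) (f : (Fin n → X) → ℝ) : ℝ :=
  sSup {d : ℝ | ∃ x z : Fin n → X, (∀ k, k ≠ i → x k = z k) ∧ d = |f x - f z|}

/-- `W` is a Wasserstein matrix for the Markov kernel `P` on `X^n`. -/
def IsWassersteinMatrix {n : ℕ} {X : Type*} [MeasurableSpace X]
    (P : Kernel (Fin n → X) (Fin n → X)) (W : Matrix (Fin n) (Fin n) ℝ) : Prop :=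
  (∀ i j, 0 ≤ W i j) ∧
  ∀ f : (Fin n → X) → ℝ, Measurable f → (∃ C, ∀ x, |f x| ≤ C) →
    ∀ j, osc j (fun x => ∫ y, f y ∂(P x)) ≤ ∑ i, osc i f * W i j

/-- `Ψ` is a coupling of `μ` and `ν`. -/
def IsCoupling {E : Type*} [MeasurableSpace E] (Ψ : Measure (E × E)) (μ ν : Measure E) : Prop :=
  Ψ.map Prod.fst = μ ∧ Ψ.map Prod.snd = ν

/-- `k`-fold composition of a Markov kernel with itself. -/
noncomputable def kpow {E : Type*} [MeasurableSpace E] (P : Kernel E E) : ℕ → Kernel E E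
  | 0 => Kernel.id
  | (k + 1) => P ∘ₖ kpow P k

/-- Maximum absolute row sum norm `‖A‖_∞`. -/
noncomputable def rowNorm {n : ℕ} (A : Matrix (Fin n) (Fin n) ℝ) : ℝ :=
  ⨆ i, ∑ j, |A i j|

/-- The boundary `∂J` of a block `J ⊆ I`. -/
def bdry {n : ℕ} (J : Finset (Fin n)) : Finset (Fin n) :=
  Finset.univ.filter fun t => t ∉ J ∧ ∃ s ∈ J, ((s : ℕ) = (t : ℕ) + 1 ∨ (t : ℕ) = (s : ℕ) + 1)

/-- `W` has the Gibbs block structure for block `J`. -/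
def GibbsBlock {n : ℕ} (J : Finset (Fin n)) (W : Matrix (Fin n) (Fin n) ℝ) : Prop :=
  (∀ i j, 0 ≤ W i j ∧ W i j ≤ 1) ∧
  (∀ i, i ∉ J → ∀ j, W i j = if i = j then 1 else 0) ∧
  (∀ i ∈ J, ∀ j, j ∉ bdry J → W i j = 0)

/-- The composite kernel `P^{J_1} ∘ P^{J_2} ∘ ⋯ ∘ P^{J_m}` applying `P 1` first. -/
noncomputable def sweepKernel {E : Type*} [MeasurableSpace E]
    (P : ℕ → Kernel E E) (m : ℕ) : Kernel E E :=
  ((List.range m).map fun i => P (i + 1)).foldl (fun acc κ => κ ∘ₖ acc) Kernel.id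

/-- The matrix product `W^{J_m} · W^{J_{m-1}} ⋯ W^{J_1}`. -/
noncomputable def sweepMat {n : ℕ} (W : ℕ → Matrix (Fin n) (Fin n) ℝ) (m : ℕ) :
    Matrix (Fin n) (Fin n) ℝ :=
  (((List.range m).map fun i => m - i).map W).prod


section helpers

variable {E : Type*} [MeasurableSpace E]

lemma RvH_integrable_of_bdd {μ : Measure E} [IsFiniteMeasure μ] {g : E → ℝ}
    (hg : AEStronglyMeasurable g μ) {C : ℝ} (hC : ∀ x, |g x| ≤ C) : Integrable g μ :=
  Integrable.mono' (integrable_const C) hg (ae_of_all _ fun x => by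
    simpa [Real.norm_eq_abs] using hC x)

lemma RvH_kernel_integral_measurable (κ : Kernel E E) [IsSFiniteKernel κ]
    {g : E → ℝ} (hg : Measurable g) : Measurable fun x => ∫ y, g y ∂κ x := by
  have : StronglyMeasurable (Function.uncurry fun (_ : E) (y : E) => g y) :=
    (hg.comp measurable_snd).stronglyMeasurable
  exact (StronglyMeasurable.integral_kernel_prod_right (κ := κ) this).measurable

lemma RvH_kernel_integral_bdd (κ : Kernel E E) [IsMarkovKernel κ]
    {g : E → ℝ} {C : ℝ} (hC : ∀ x, |g x| ≤ C) (x : E) : |∫ y, g y ∂κ x| ≤ C := by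
  have h0 : 0 ≤ C := le_trans (abs_nonneg _) (hC x)
  have := norm_integral_le_of_norm_le_const (μ := κ x) (f := g) (C := C)
    (ae_of_all _ fun y => by simpa [Real.norm_eq_abs] using hC y)
  simpa [Real.norm_eq_abs, measure_univ] using this

lemma RvH_integral_comp (η κ : Kernel E E) [IsMarkovKernel η] [IsMarkovKernel κ] (a : E)
    {g : E → ℝ} (hg : Measurable g) {C : ℝ} (hC : ∀ x, |g x| ≤ C) :
    ∫ c, g c ∂((η ∘ₖ κ) a) = ∫ b, ∫ c, g c ∂η b ∂κ a := by
  rw [Kernel.comp_eq_snd_compProd, Kernel.snd_apply,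
    integral_map measurable_snd.aemeasurable hg.aestronglyMeasurable]
  have hint : Integrable (fun z : E × E => g z.2) (((κ ⊗ₖ Kernel.prodMkLeft E η)) a) :=
    RvH_integrable_of_bdd ((hg.comp measurable_snd).aestronglyMeasurable) (fun z => hC z.2)
  rw [ProbabilityTheory.integral_compProd hint]
  simp [Kernel.prodMkLeft_apply]

end helpers

open scoped Classical

section osc_lemmas
variable {n : ℕ} {X : Type*}

lemma RvH_osc_bdd (i : Fin n) (f : (Fin n → X) → ℝ) {C : ℝ} (hC : ∀ x, |f x| ≤ C) :
    BddAbove {d : ℝ | ∃ x z : Fin n → X, (∀ k, k ≠ i → x k = z k) ∧ d = |f x - f z|} := by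
  refine ⟨2 * C, ?_⟩
  rintro d ⟨x, z, -, rfl⟩
  calc |f x - f z| ≤ |f x| + |f z| := abs_sub _ _
    _ ≤ C + C := add_le_add (hC x) (hC z)
    _ = 2 * C := by ring

lemma RvH_le_osc (i : Fin n) (f : (Fin n → X) → ℝ) {C : ℝ} (hC : ∀ x, |f x| ≤ C)
    {x z : Fin n → X} (h : ∀ k, k ≠ i → x k = z k) : |f x - f z| ≤ osc i f :=
  le_csSup (RvH_osc_bdd i f hC) ⟨x, z, h, rfl⟩

lemma RvH_osc_nonneg [Nonempty (Fin n → X)] (i : Fin n) (f : (Fin n → X) → ℝ) {C : ℝ}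
    (hC : ∀ x, |f x| ≤ C) : 0 ≤ osc i f := by
  obtain ⟨x⟩ := ‹Nonempty (Fin n → X)›
  have := RvH_le_osc i f hC (x := x) (z := x) (fun _ _ => rfl)
  simpa using this

lemma RvH_telescope (f : (Fin n → X) → ℝ) {C : ℝ} (hC : ∀ x, |f x| ≤ C) (x z : Fin n → X) :
    |f x - f z| ≤ ∑ j : Fin n, osc j f * (if x j = z j then 0 else 1) := by
  classical
  set y : ℕ → (Fin n → X) := fun t i => if (i : ℕ) < t then z i else x i with hy
  have h0 : y 0 = x := funext fun i => by simp [hy]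
  have hnn : y n = z := funext fun i => by simp [hy, i.isLt]
  have htel : f x - f z = ∑ t ∈ Finset.range n, (f (y t) - f (y (t + 1))) := by
    rw [Finset.sum_range_sub' (fun t => f (y t)), h0, hnn]
  have hstep : ∀ t : Fin n,
      |f (y (t : ℕ)) - f (y ((t : ℕ) + 1))| ≤ osc t f * (if x t = z t then 0 else 1) := by
    intro t
    by_cases hxz : x t = z t
    · have : y (t : ℕ) = y ((t : ℕ) + 1) := by
        funext i
        by_cases hit : i = t
        · subst hit; simp [hy, hxz]
        · have : ((i : ℕ) < (t : ℕ) ↔ (i : ℕ) < (t : ℕ) + 1) := by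
            constructor
            · omega
            · intro h; rcases Nat.lt_succ_iff_lt_or_eq.mp h with h | h
              · exact h
              · exact absurd (Fin.ext h) hit
          simp only [hy]
          by_cases hlt : (i : ℕ) < (t : ℕ)
          · rw [if_pos hlt, if_pos (this.mp hlt)]
          · rw [if_neg hlt, if_neg (fun hh => hlt (this.mpr hh))]
      rw [this, hxz] at *
      simp [hxz]
    · rw [if_neg hxz, mul_one]
      refine RvH_le_osc t f hC ?_
      intro i hit
      have : ((i : ℕ) < (t : ℕ) ↔ (i : ℕ) < (t : ℕ) + 1) := by
        constructor
        · omega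
        · intro h; rcases Nat.lt_succ_iff_lt_or_eq.mp h with h | h
          · exact h
          · exact absurd (Fin.ext h) hit
      simp only [hy]
      by_cases hlt : (i : ℕ) < (t : ℕ)
      · rw [if_pos hlt, if_pos (this.mp hlt)]
      · rw [if_neg hlt, if_neg (fun hh => hlt (this.mpr hh))]
  calc |f x - f z| = |∑ t ∈ Finset.range n, (f (y t) - f (y (t + 1)))| := by rw [htel]
    _ ≤ ∑ t ∈ Finset.range n, |f (y t) - f (y (t + 1))| := Finset.abs_sum_le_sum_abs _ _
    _ = ∑ t : Fin n, |f (y (t : ℕ)) - f (y ((t : ℕ) + 1))| :=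
        (Fin.sum_univ_eq_sum_range (fun t => |f (y t) - f (y (t + 1))|) n).symm
    _ ≤ ∑ t : Fin n, osc t f * (if x t = z t then 0 else 1) :=
        Finset.sum_le_sum fun t _ => hstep t

end osc_lemmas

section wass
variable {n : ℕ} {X : Type*} [MeasurableSpace X]

lemma RvH_wass_id : IsWassersteinMatrix (Kernel.id : Kernel (Fin n → X) (Fin n → X)) 1 := by
  constructor
  · intro i j
    rw [Matrix.one_apply]
    split <;> norm_num
  · intro f hf hfb j
    have heq : (fun x => ∫ y, f y ∂(Kernel.id : Kernel (Fin n → X) (Fin n → X)) x) = f := by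
      funext x
      rw [Kernel.id_apply, integral_dirac' f x hf.stronglyMeasurable]
    rw [heq]
    have : ∑ i, osc i f * (1 : Matrix (Fin n) (Fin n) ℝ) i j = osc j f := by
      simp [Matrix.one_apply, mul_ite]
    rw [this]

lemma RvH_wass_comp (κ η : Kernel (Fin n → X) (Fin n → X)) [IsMarkovKernel κ] [IsMarkovKernel η]
    {A B : Matrix (Fin n) (Fin n) ℝ}
    (hA : IsWassersteinMatrix κ A) (hB : IsWassersteinMatrix η B) :
    IsWassersteinMatrix (κ ∘ₖ η) (A * B) := by
  constructor
  · intro i j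
    rw [Matrix.mul_apply]
    exact Finset.sum_nonneg fun t _ => mul_nonneg (hA.1 i t) (hB.1 t j)
  · intro f hf hfb j
    obtain ⟨C, hC⟩ := hfb
    have hm : Measurable fun x => ∫ y, f y ∂κ x := RvH_kernel_integral_measurable κ hf
    have hb : ∀ x, |∫ y, f y ∂κ x| ≤ C := fun x => RvH_kernel_integral_bdd κ hC x
    have heq : (fun x => ∫ y, f y ∂((κ ∘ₖ η) x)) = fun x => ∫ b, ∫ y, f y ∂κ b ∂η x := by
      funext x
      exact RvH_integral_comp κ η x hf hC
    rw [heq]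
    calc osc j (fun x => ∫ b, ∫ y, f y ∂κ b ∂η x)
        ≤ ∑ i, osc i (fun b => ∫ y, f y ∂κ b) * B i j := hB.2 _ hm ⟨C, hb⟩ j
      _ ≤ ∑ i, (∑ t, osc t f * A t i) * B i j := by
          refine Finset.sum_le_sum fun i _ => ?_
          exact mul_le_mul_of_nonneg_right (hA.2 f hf ⟨C, hC⟩ i) (hB.1 i j)
      _ = ∑ t, osc t f * (A * B) t j := by
          simp_rw [Matrix.mul_apply, Finset.sum_mul, Finset.mul_sum]
          rw [Finset.sum_comm]
          exact Finset.sum_congr rfl fun t _ => Finset.sum_congr rfl fun i _ => by ring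

lemma RvH_wass_foldl (P : ℕ → Kernel (Fin n → X) (Fin n → X))
    (W : ℕ → Matrix (Fin n) (Fin n) ℝ) :
    ∀ (L : List ℕ) (κ0 : Kernel (Fin n → X) (Fin n → X)) (M0 : Matrix (Fin n) (Fin n) ℝ),
    IsMarkovKernel κ0 →
    (∀ l ∈ L, IsMarkovKernel (P l) ∧ IsWassersteinMatrix (P l) (W l)) →
    IsWassersteinMatrix κ0 M0 →
    IsMarkovKernel ((L.map P).foldl (fun acc κ => κ ∘ₖ acc) κ0) ∧
    IsWassersteinMatrix ((L.map P).foldl (fun acc κ => κ ∘ₖ acc) κ0)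
      ((L.reverse.map W).prod * M0) := by
  intro L
  induction L with
  | nil =>
    intro κ0 M0 h0 _ hW0
    simpa using ⟨h0, hW0⟩
  | cons l L ih =>
    intro κ0 M0 h0 hL hW0
    haveI := h0
    haveI := (hL l (List.mem_cons_self)).1
    have hrec := ih (P l ∘ₖ κ0) (W l * M0) inferInstance
      (fun l' hl' => hL l' (List.mem_cons_of_mem _ hl'))
      (RvH_wass_comp (P l) κ0 (hL l (List.mem_cons_self)).2 hW0)
    have hmat : ((l :: L).reverse.map W).prod * M0 = (L.reverse.map W).prod * (W l * M0) := by
      rw [List.reverse_cons, List.map_append, List.prod_append]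
      simp [Matrix.mul_assoc]
    rw [hmat]
    simpa using hrec

lemma RvH_rev_range (m : ℕ) :
    ((List.range m).map fun i => i + 1).reverse = (List.range m).map fun i => m - i := by
  apply List.ext_getElem
  · simp
  intro i h1 h2
  simp only [List.length_reverse, List.length_map, List.length_range] at h1 h2
  rw [List.getElem_reverse]
  simp only [List.getElem_map, List.getElem_range]
  simp only [List.length_map, List.length_range]
  omega
end wass

section mat
variable {n m : ℕ} (J : ℕ → Finset (Fin n)) (W : ℕ → Matrix (Fin n) (Fin n) ℝ)

/-- coordinates covered by the blocks in the list -/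
def RvH_cov (J : ℕ → Finset (Fin n)) : List ℕ → Finset (Fin n)
  | [] => ∅
  | (l :: L) => J l ∪ RvH_cov J L

lemma RvH_bdry_notmem {J' : Finset (Fin n)} {i : Fin n} (h : i ∈ J') : i ∉ bdry J' := by
  simp only [bdry, Finset.mem_filter]
  tauto

lemma RvH_prod_nonneg (hblock : ∀ k ∈ Finset.Icc 1 m, GibbsBlock (J k) (W k)) :
    ∀ L : List ℕ, (∀ l ∈ L, l ∈ Finset.Icc 1 m) →
    ∀ i j, 0 ≤ ((L.map W).prod) i j := by
  intro L
  induction L with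
  | nil =>
    intro _ i j
    simp only [List.map_nil, List.prod_nil]
    rw [Matrix.one_apply]
    split <;> norm_num
  | cons l L ih =>
    intro hL i j
    simp only [List.map_cons, List.prod_cons]
    rw [Matrix.mul_apply]
    refine Finset.sum_nonneg fun t _ => mul_nonneg ?_ (ih (fun l' h' => hL l' (List.mem_cons_of_mem _ h')) t j)
    exact ((hblock l (hL l (List.mem_cons_self))).1 i t).1

lemma RvH_colzero (hblock : ∀ k ∈ Finset.Icc 1 m, GibbsBlock (J k) (W k)) :
    ∀ L : List ℕ, (∀ l ∈ L, l ∈ Finset.Icc 1 m) →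
    ∀ i : Fin n, i ∉ (Finset.Icc 1 m).biUnion (fun l => bdry (J l)) →
    ∀ j, ((L.map W).prod) j i =
      if i ∈ RvH_cov J L then 0 else (if j = i then 1 else 0) := by
  intro L
  induction L with
  | nil =>
    intro _ i _ j
    simp [RvH_cov, Matrix.one_apply]
  | cons l L ih =>
    intro hL i hiD j
    have hl : l ∈ Finset.Icc 1 m := hL l (List.mem_cons_self)
    have gb := hblock l hl
    have hibd : i ∉ bdry (J l) := fun h =>
      hiD (Finset.mem_biUnion.mpr ⟨l, hl, h⟩)
    simp only [List.map_cons, List.prod_cons]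
    rw [Matrix.mul_apply]
    have hML := ih (fun l' h' => hL l' (List.mem_cons_of_mem _ h')) i hiD
    by_cases hcov : i ∈ RvH_cov J L
    · have : ∀ t, W l j t * ((L.map W).prod) t i = 0 := by
        intro t; rw [hML t, if_pos hcov, mul_zero]
      rw [Finset.sum_congr rfl fun t _ => this t, Finset.sum_const, smul_zero]
      rw [if_pos (by simp [RvH_cov, hcov])]
    · have : ∀ t, W l j t * ((L.map W).prod) t i = if t = i then W l j t else 0 := by
        intro t; rw [hML t, if_neg hcov]
        by_cases hti : t = i <;> simp [hti]
      rw [Finset.sum_congr rfl fun t _ => this t, Finset.sum_ite_eq' Finset.univ i]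
      simp only [Finset.mem_univ, if_true]
      by_cases hiJ : i ∈ J l
      · rw [if_pos (by simp [RvH_cov, hiJ])]
        by_cases hjJ : j ∈ J l
        · exact gb.2.2 j hjJ i hibd
        · rw [gb.2.1 j hjJ i, if_neg (fun h : j = i => hjJ (by rw [h]; exact hiJ))]
      · rw [if_neg (by simp [RvH_cov, hiJ, hcov])]
        by_cases hjJ : j ∈ J l
        · rw [gb.2.2 j hjJ i hibd, if_neg (fun h : j = i => hiJ (by rw [← h]; exact hjJ))]
        · exact gb.2.1 j hjJ i
end mat

section key
variable {n m : ℕ} {J : ℕ → Finset (Fin n)} {W : ℕ → Matrix (Fin n) (Fin n) ℝ}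

lemma RvH_assoc (c : Fin n → ℝ) (A B : Matrix (Fin n) (Fin n) ℝ) (j : Fin n) :
    ∑ i, c i * (A * B) i j = ∑ t, (∑ i, c i * A i t) * B t j := by
  simp_rw [Matrix.mul_apply, Finset.mul_sum, Finset.sum_mul]
  rw [Finset.sum_comm]
  exact Finset.sum_congr rfl fun t _ => Finset.sum_congr rfl fun i _ => by ring

lemma RvH_rowsum {l : ℕ} (gb : GibbsBlock (J l) (W l)) :
    ∀ i : Fin n, (i ∉ J l → ∑ t, W l i t = 1) ∧
      (i ∈ J l → ∑ t, W l i t = ∑ t ∈ bdry (J l), W l i t) := by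
  intro i
  constructor
  · intro hi
    rw [Finset.sum_congr rfl fun t _ => gb.2.1 i hi t]
    simp
  · intro hi
    symm
    refine Finset.sum_subset (Finset.subset_univ _) ?_
    intro t _ ht
    exact gb.2.2 i hi t ht

lemma RvH_key (hblock : ∀ k ∈ Finset.Icc 1 m, GibbsBlock (J k) (W k))
    {lam : ℝ} (hlam0 : 0 ≤ lam) (hlam1 : lam ≤ 1)
    (hA1 : ∀ k ∈ Finset.Icc 1 m, ∀ i ∈ J k,
      i ∈ (Finset.Icc 1 m).biUnion (fun l => bdry (J l)) →
      ∑ j ∈ bdry (J k), W k i j ≤ lam) :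
    ∀ L : List ℕ, (∀ l ∈ L, l ∈ Finset.Icc 1 m) →
    ∀ a b : Fin n → ℝ, (∀ i, 0 ≤ a i) → (∀ i, 0 ≤ b i) →
    (∀ i, i ∉ (Finset.Icc 1 m).biUnion (fun l => bdry (J l)) → a i = 0) →
    (∀ i, i ∉ (Finset.Icc 1 m).biUnion (fun l => bdry (J l)) → b i = 0) →
    ∑ j, (∑ i, (a i + b i) * ((L.map W).prod) i j) ≤
      (∑ i, a i) + lam * (∑ i ∈ RvH_cov J L, b i) + ∑ i ∈ (RvH_cov J L)ᶜ, b i := by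
  intro L
  induction L with
  | nil =>
    intro _ a b ha0 hb0 _ _
    refine le_of_eq ?_
    have : ∀ j : Fin n, (∑ i, (a i + b i) * ((([] : List ℕ).map W).prod) i j) = a j + b j := by
      intro j
      simp only [List.map_nil, List.prod_nil]
      have : ∀ i : Fin n, (a i + b i) * (1 : Matrix (Fin n) (Fin n) ℝ) i j
          = if i = j then a i + b i else 0 := by
        intro i
        rw [Matrix.one_apply]
        by_cases h : i = j <;> simp [h]
      rw [Finset.sum_congr rfl fun i _ => this i, Finset.sum_ite_eq' Finset.univ j]
      simp
    rw [Finset.sum_congr rfl fun j _ => this j]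
    show ∑ j, (a j + b j) = (∑ i, a i) + lam * (∑ i ∈ (∅ : Finset (Fin n)), b i)
      + ∑ i ∈ (∅ : Finset (Fin n))ᶜ, b i
    rw [Finset.sum_add_distrib, Finset.sum_empty, Finset.compl_empty]
    ring
  | cons l L ih =>
    intro hL a b ha0 hb0 haD hbD
    have hl : l ∈ Finset.Icc 1 m := hL l (List.mem_cons_self)
    have gb := hblock l hl
    have hbdD : bdry (J l) ⊆ (Finset.Icc 1 m).biUnion (fun l => bdry (J l)) :=
      fun t ht => Finset.mem_biUnion.mpr ⟨l, hl, ht⟩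
    set D := (Finset.Icc 1 m).biUnion (fun l => bdry (J l)) with hD
    set a' : Fin n → ℝ := fun t => (∑ i, a i * W l i t) + ∑ i ∈ J l, b i * W l i t with ha'
    set b' : Fin n → ℝ := fun t => if t ∈ J l then 0 else b t with hb'
    -- rewrite LHS
    have hsplit : ∀ t, (∑ i, (a i + b i) * W l i t) = a' t + b' t := by
      intro t
      have h1 : ∑ i, (a i + b i) * W l i t = (∑ i, a i * W l i t) + ∑ i, b i * W l i t := by
        rw [← Finset.sum_add_distrib]
        exact Finset.sum_congr rfl fun i _ => by ring
      have h2 : ∑ i, b i * W l i t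
          = (∑ i ∈ Finset.univ.filter (· ∈ J l), b i * W l i t)
            + ∑ i ∈ Finset.univ.filter (· ∉ J l), b i * W l i t :=
        (Finset.sum_filter_add_sum_filter_not _ _ _).symm
      have h3 : Finset.univ.filter (· ∈ J l) = J l := by
        ext t; simp
      have h4 : ∑ i ∈ Finset.univ.filter (· ∉ J l), b i * W l i t = b' t := by
        have : ∀ i ∈ Finset.univ.filter (· ∉ J l), b i * W l i t
            = if i = t then b i else 0 := by
          intro i hi
          simp only [Finset.mem_filter] at hi
          rw [gb.2.1 i hi.2 t]
          by_cases h : i = t <;> simp [h]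
        rw [Finset.sum_congr rfl this, Finset.sum_ite_eq' _ t]
        simp only [Finset.mem_filter, Finset.mem_univ, true_and, hb']
        by_cases h : t ∈ J l <;> simp [h]
      rw [h1, h2, h3, h4, ha']
      ring
    have hLHS : ∑ j, (∑ i, (a i + b i) * (((l :: L).map W).prod) i j)
        = ∑ j, (∑ t, (a' t + b' t) * ((L.map W).prod) t j) := by
      refine Finset.sum_congr rfl fun j _ => ?_
      simp only [List.map_cons, List.prod_cons]
      rw [RvH_assoc]
      exact Finset.sum_congr rfl fun t _ => by rw [hsplit t]
    rw [hLHS]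
    -- properties of a' b'
    have ha'0 : ∀ t, 0 ≤ a' t := by
      intro t
      refine add_nonneg (Finset.sum_nonneg fun i _ => mul_nonneg (ha0 i) (gb.1 i t).1)
        (Finset.sum_nonneg fun i _ => mul_nonneg (hb0 i) (gb.1 i t).1)
    have hb'0 : ∀ t, 0 ≤ b' t := by
      intro t; rw [hb']
      by_cases h : t ∈ J l <;> simp [h, hb0 t]
    have ha'D : ∀ t, t ∉ D → a' t = 0 := by
      intro t ht
      have htb : t ∉ bdry (J l) := fun h => ht (hbdD h)
      have e1 : ∑ i, a i * W l i t = 0 := by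
        refine Finset.sum_eq_zero fun i _ => ?_
        by_cases hiJ : i ∈ J l
        · rw [gb.2.2 i hiJ t htb, mul_zero]
        · rw [gb.2.1 i hiJ t]
          by_cases h : i = t
          · subst h; rw [haD i ht, zero_mul]
          · simp [h]
      have e2 : ∑ i ∈ J l, b i * W l i t = 0 :=
        Finset.sum_eq_zero fun i hi => by rw [gb.2.2 i hi t htb, mul_zero]
      simp [ha', e1, e2]
    have hb'D : ∀ t, t ∉ D → b' t = 0 := by
      intro t ht; rw [hb']
      by_cases h : t ∈ J l <;> simp [h, hbD t ht]
    have hIH := ih (fun l' h' => hL l' (List.mem_cons_of_mem _ h')) a' b' ha'0 hb'0 ha'D hb'D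
    refine le_trans hIH ?_
    -- bound the three pieces
    have hAa : ∑ t, a' t ≤ (∑ i, a i) + lam * ∑ i ∈ J l, b i := by
      have hswap1 : ∑ t, ∑ i, a i * W l i t = ∑ i, a i * ∑ t, W l i t := by
        rw [Finset.sum_comm]
        exact Finset.sum_congr rfl fun i _ => by rw [Finset.mul_sum]
      have hswap2 : ∑ t, ∑ i ∈ J l, b i * W l i t = ∑ i ∈ J l, b i * ∑ t, W l i t := by
        rw [Finset.sum_comm]
        exact Finset.sum_congr rfl fun i _ => by rw [Finset.mul_sum]
      have hsum : ∑ t, a' t = (∑ i, a i * ∑ t, W l i t) + ∑ i ∈ J l, b i * ∑ t, W l i t := by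
        rw [ha']
        show ∑ t, ((∑ i, a i * W l i t) + ∑ i ∈ J l, b i * W l i t) = _
        rw [Finset.sum_add_distrib, hswap1, hswap2]
      rw [hsum]
      refine add_le_add ?_ ?_
      · refine Finset.sum_le_sum fun i _ => ?_
        by_cases hiJ : i ∈ J l
        · by_cases hiD : i ∈ D
          · have : ∑ t, W l i t ≤ lam := by
              rw [(RvH_rowsum gb i).2 hiJ]
              exact hA1 l hl i hiJ hiD
            calc a i * ∑ t, W l i t ≤ a i * 1 :=
                  mul_le_mul_of_nonneg_left (le_trans this hlam1) (ha0 i)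
              _ = a i := mul_one _
          · rw [haD i hiD, zero_mul]
        · rw [(RvH_rowsum gb i).1 hiJ, mul_one]
      · rw [Finset.mul_sum]
        refine Finset.sum_le_sum fun i hi => ?_
        by_cases hiD : i ∈ D
        · have : ∑ t, W l i t ≤ lam := by
            rw [(RvH_rowsum gb i).2 hi]
            exact hA1 l hl i hi hiD
          calc b i * ∑ t, W l i t ≤ b i * lam :=
                mul_le_mul_of_nonneg_left this (hb0 i)
            _ = lam * b i := mul_comm _ _
        · simp [hbD i hiD]
    have hBb : ∑ t ∈ RvH_cov J L, b' t = ∑ t ∈ RvH_cov J L \ J l, b t := by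
      have : ∀ t ∈ RvH_cov J L, b' t = if t ∉ J l then b t else 0 := by
        intro t _; rw [hb']
        by_cases h : t ∈ J l <;> simp [h]
      rw [Finset.sum_congr rfl this, ← Finset.sum_filter, ← Finset.sdiff_eq_filter]
    have hCb : ∑ t ∈ (RvH_cov J L)ᶜ, b' t = ∑ t ∈ (RvH_cov J (l :: L))ᶜ, b t := by
      have h1 : ∀ t ∈ (RvH_cov J L)ᶜ, b' t = if t ∉ J l then b t else 0 := by
        intro t _; rw [hb']
        by_cases h : t ∈ J l <;> simp [h]
      rw [Finset.sum_congr rfl h1, ← Finset.sum_filter, ← Finset.sdiff_eq_filter]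
      congr 1
      ext x
      simp only [RvH_cov, Finset.mem_sdiff, Finset.mem_compl, Finset.mem_union]
      tauto
    have hunion : ∑ i ∈ J l, b i + ∑ i ∈ RvH_cov J L \ J l, b i
        = ∑ i ∈ RvH_cov J (l :: L), b i := by
      show _ = ∑ i ∈ J l ∪ RvH_cov J L, b i
      rw [← Finset.union_sdiff_self_eq_union, Finset.sum_union Finset.disjoint_sdiff]
    rw [hBb, hCb]
    calc (∑ t, a' t) + lam * ∑ t ∈ RvH_cov J L \ J l, b t + ∑ t ∈ (RvH_cov J (l :: L))ᶜ, b t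
        ≤ ((∑ i, a i) + lam * ∑ i ∈ J l, b i) + lam * ∑ t ∈ RvH_cov J L \ J l, b t
            + ∑ t ∈ (RvH_cov J (l :: L))ᶜ, b t := by
          exact add_le_add (add_le_add hAa le_rfl) le_rfl
      _ = (∑ i, a i) + lam * (∑ i ∈ J l, b i + ∑ t ∈ RvH_cov J L \ J l, b t)
            + ∑ t ∈ (RvH_cov J (l :: L))ᶜ, b t := by ring
      _ = (∑ i, a i) + lam * (∑ i ∈ RvH_cov J (l :: L), b i)
            + ∑ t ∈ (RvH_cov J (l :: L))ᶜ, b t := by rw [hunion]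
end key

section kpowlem
variable {E : Type*} [MeasurableSpace E]

lemma RvH_kpow_markov (P : Kernel E E) [IsMarkovKernel P] :
    ∀ r, IsMarkovKernel (kpow P r)
  | 0 => by rw [kpow]; infer_instance
  | (r + 1) => by
    haveI := RvH_kpow_markov P r
    rw [kpow]
    infer_instance

lemma RvH_kpow_succ (P : Kernel E E) [IsMarkovKernel P] :
    ∀ r, kpow P (r + 1) = kpow P r ∘ₖ P
  | 0 => by
    show P ∘ₖ Kernel.id = Kernel.id ∘ₖ P
    rw [Kernel.comp_id, Kernel.id_comp]
  | (r + 1) => by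
    rw [show kpow P (r + 2) = P ∘ₖ kpow P (r + 1) from rfl, RvH_kpow_succ P r,
      ← Kernel.comp_assoc, ← RvH_kpow_succ P r]
    rfl
end kpowlem

lemma RvH_mem_cov {n : ℕ} {J : ℕ → Finset (Fin n)} {i : Fin n} :
    ∀ (L : List ℕ) (l : ℕ), l ∈ L → i ∈ J l → i ∈ RvH_cov J L := by
  intro L
  induction L with
  | nil => intro l hl; exact absurd hl List.not_mem_nil
  | cons l' L ih =>
    intro l hl hi
    rcases List.mem_cons.mp hl with h | h
    · subst h; exact Finset.mem_union_left _ hi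
    · exact Finset.mem_union_right _ (ih l h hi)

theorem stmt1 {n m : ℕ} {X : Type*} [MeasurableSpace X] [StandardBorelSpace X]
    (hn : 1 ≤ n) (hm : 1 ≤ m)
    (J : ℕ → Finset (Fin n))
    (P : ℕ → Kernel (Fin n → X) (Fin n → X)) (hP : ∀ k, IsMarkovKernel (P k))
    (W : ℕ → Matrix (Fin n) (Fin n) ℝ)
    (hcover : ∀ i : Fin n, ∃ k ∈ Finset.Icc 1 m, i ∈ J k)
    (hblock : ∀ k ∈ Finset.Icc 1 m, GibbsBlock (J k) (W k))
    (hWass : ∀ k ∈ Finset.Icc 1 m, IsWassersteinMatrix (P k) (W k))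
    (lam : ℝ) (hlam0 : 0 ≤ lam) (hlam1 : lam < 1)
    (hA1 : ∀ k ∈ Finset.Icc 1 m, ∀ i ∈ J k,
      i ∈ (Finset.Icc 1 m).biUnion (fun l => bdry (J l)) →
      ∑ j ∈ bdry (J k), W k i j ≤ lam)
    (μ ν : Measure (Fin n → X)) [IsProbabilityMeasure μ] [IsProbabilityMeasure ν]
    (Ψ : Measure ((Fin n → X) × (Fin n → X))) [IsProbabilityMeasure Ψ]
    (hΨ : IsCoupling Ψ μ ν)
    (f : (Fin n → X) → ℝ) (hf : Measurable f) (hfb : ∃ C, ∀ x, |f x| ≤ C)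
    (k : ℕ) (hk : 1 ≤ k) :
    |(∫ x, (∫ y, f y ∂(kpow (sweepKernel P m) k x)) ∂μ) -
        ∫ x, (∫ y, f y ∂(kpow (sweepKernel P m) k x)) ∂ν| ≤
      rowNorm (sweepMat W m) * lam ^ (k - 1) *
        (⨆ j : Fin n, (Ψ {q | q.1 j ≠ q.2 j}).toReal) * ∑ i : Fin n, osc i f := by
  classical
  obtain ⟨C, hC⟩ := hfb
  -- nonemptiness
  have hne : Nonempty (Fin n → X) := by
    by_contra h
    rw [not_nonempty_iff] at h
    have h1 : μ Set.univ = 1 := measure_univ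
    rw [Set.univ_eq_empty_iff.mpr h] at h1
    simp at h1
  haveI := hne
  haveI : Nonempty (Fin n) := ⟨⟨0, hn⟩⟩
  set D := (Finset.Icc 1 m).biUnion (fun l => bdry (J l)) with hD
  set PP := sweepKernel P m with hPdef
  set M := sweepMat W m with hMdef
  -- the Wasserstein matrix of the sweep kernel
  set L0 : List ℕ := (List.range m).map (fun i => i + 1) with hL0
  have hL0mem : ∀ l ∈ L0, l ∈ Finset.Icc 1 m := by
    intro l hl
    rw [hL0] at hl
    simp only [List.mem_map, List.mem_range] at hl
    obtain ⟨i, hi, rfl⟩ := hl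
    simp only [Finset.mem_Icc]
    omega
  have hfold := RvH_wass_foldl P W L0 Kernel.id 1 inferInstance
    (fun l hl => ⟨hP l, hWass l (hL0mem l hl)⟩) RvH_wass_id
  have hPK : IsMarkovKernel PP := by
    rw [hPdef, sweepKernel]
    have h1 := hfold.1
    rw [hL0, List.map_map] at h1
    simpa [Function.comp_def] using h1
  haveI := hPK
  have hMrev : (L0.reverse.map W).prod * 1 = M := by
    rw [Matrix.mul_one, hMdef, sweepMat, hL0, RvH_rev_range]
  have hMW : IsWassersteinMatrix PP M := by
    rw [hPdef, sweepKernel, ← hMrev]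
    have h2 := hfold.2
    rw [show L0.map P = (List.range m).map (fun i => P (i + 1)) by
      rw [hL0, List.map_map]; simp [Function.comp]] at h2
    exact h2
  have hMnn : ∀ i j, 0 ≤ M i j := hMW.1
  -- M as a product over the list L1
  set L1 : List ℕ := (List.range m).map (fun i => m - i) with hL1
  have hL1mem : ∀ l ∈ L1, l ∈ Finset.Icc 1 m := by
    intro l hl
    rw [hL1] at hl
    simp only [List.mem_map, List.mem_range] at hl
    obtain ⟨i, hi, rfl⟩ := hl
    simp only [Finset.mem_Icc]
    omega
  have hMprod : M = (L1.map W).prod := by rw [hMdef, sweepMat, hL1]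
  have hcovuniv : RvH_cov J L1 = Finset.univ := by
    refine Finset.eq_univ_of_forall fun i => ?_
    obtain ⟨kk, hkk, hikk⟩ := hcover i
    refine RvH_mem_cov L1 kk ?_ hikk
    rw [hL1]
    simp only [List.mem_map, List.mem_range]
    simp only [Finset.mem_Icc] at hkk
    exact ⟨m - kk, by omega, by omega⟩
  have hMcol : ∀ i, i ∉ D → ∀ j, M j i = 0 := by
    intro i hi j
    have := RvH_colzero J W hblock L1 hL1mem i hi j
    rw [← hMprod] at this
    rw [this, if_pos (by rw [hcovuniv]; exact Finset.mem_univ i)]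
  have hcontract : ∀ u : Fin n → ℝ, (∀ i, 0 ≤ u i) → (∀ i, i ∉ D → u i = 0) →
      ∑ j, (∑ i, u i * M i j) ≤ lam * ∑ i, u i := by
    intro u hu0 huD
    have hkey := RvH_key hblock hlam0 (le_of_lt hlam1) hA1 L1 hL1mem
      (fun _ => 0) u (fun i => le_refl 0) hu0 (fun i _ => rfl) huD
    rw [hcovuniv] at hkey
    simp only [zero_add, Finset.sum_const_zero, Finset.compl_univ, Finset.sum_empty,
      add_zero] at hkey
    calc ∑ j, (∑ i, u i * M i j) = ∑ j, (∑ i, u i * ((L1.map W).prod) i j) := by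
          rw [hMprod]
      _ ≤ lam * ∑ i, u i := by
          refine le_trans (le_of_eq ?_) hkey
          exact Finset.sum_congr rfl fun j _ => Finset.sum_congr rfl fun i _ => by ring_nf
  -- the iterates
  set g : ℕ → ((Fin n → X) → ℝ) := fun r x => ∫ y, f y ∂(kpow PP r x) with hg
  have hg0 : g 0 = f := by
    funext x
    show ∫ y, f y ∂(kpow PP 0 x) = f x
    rw [show kpow PP 0 = Kernel.id from rfl, Kernel.id_apply,
      integral_dirac' f x hf.stronglyMeasurable]
  have hrec : ∀ r, g (r + 1) = fun x => ∫ b, g r b ∂(PP x) := by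
    intro r
    funext x
    haveI := RvH_kpow_markov PP r
    show ∫ y, f y ∂(kpow PP (r + 1) x) = _
    rw [RvH_kpow_succ PP r]
    exact RvH_integral_comp (kpow PP r) PP x hf hC
  have hgprop : ∀ r, Measurable (g r) ∧ ∀ x, |g r x| ≤ C := by
    intro r
    induction r with
    | zero => rw [hg0]; exact ⟨hf, hC⟩
    | succ r ih =>
      rw [hrec r]
      exact ⟨RvH_kernel_integral_measurable PP ih.1,
        fun x => RvH_kernel_integral_bdd PP ih.2 x⟩
  have hoscnn : ∀ r j, 0 ≤ osc j (g r) := fun r j =>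
    RvH_osc_nonneg j (g r) (hgprop r).2
  have hoscf_nn : ∀ j, 0 ≤ osc j f := fun j => RvH_osc_nonneg j f hC
  have hosc_step : ∀ r j, osc j (g (r + 1)) ≤ ∑ i, osc i (g r) * M i j := by
    intro r j
    rw [hrec r]
    exact hMW.2 (g r) (hgprop r).1 ⟨C, (hgprop r).2⟩ j
  have hsupp : ∀ r, ∀ i, i ∉ D → osc i (g (r + 1)) = 0 := by
    intro r i hi
    refine le_antisymm ?_ (hoscnn (r + 1) i)
    calc osc i (g (r + 1)) ≤ ∑ t, osc t (g r) * M t i := hosc_step r i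
      _ = 0 := Finset.sum_eq_zero fun t _ => by rw [hMcol i hi t, mul_zero]
  have hsum_contract : ∀ r, ∑ j, osc j (g (r + 2)) ≤ lam * ∑ j, osc j (g (r + 1)) := by
    intro r
    calc ∑ j, osc j (g (r + 2)) ≤ ∑ j, ∑ i, osc i (g (r + 1)) * M i j :=
          Finset.sum_le_sum fun j _ => hosc_step (r + 1) j
      _ ≤ lam * ∑ i, osc i (g (r + 1)) := hcontract _ (hoscnn (r + 1)) (hsupp r)
  have hiter : ∀ r, ∑ j, osc j (g (r + 1)) ≤ lam ^ r * ∑ j, osc j (g 1) := by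
    intro r
    induction r with
    | zero => simp
    | succ r ih =>
      calc ∑ j, osc j (g (r + 2)) ≤ lam * ∑ j, osc j (g (r + 1)) := hsum_contract r
        _ ≤ lam * (lam ^ r * ∑ j, osc j (g 1)) := mul_le_mul_of_nonneg_left ih hlam0
        _ = lam ^ (r + 1) * ∑ j, osc j (g 1) := by ring
  have hrowle : ∀ i, ∑ j, M i j ≤ rowNorm M := by
    intro i
    have habs : ∑ j, M i j = ∑ j, |M i j| :=
      Finset.sum_congr rfl fun j _ => (abs_of_nonneg (hMnn i j)).symm
    rw [habs, rowNorm]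
    exact le_ciSup (f := fun i => ∑ j, |M i j|) (Set.Finite.bddAbove (Set.finite_range _)) i
  have hrow_nn : 0 ≤ rowNorm M :=
    Real.iSup_nonneg fun i => Finset.sum_nonneg fun j _ => abs_nonneg _
  have hfirst : ∑ j, osc j (g 1) ≤ rowNorm M * ∑ i, osc i f := by
    calc ∑ j, osc j (g 1) ≤ ∑ j, ∑ i, osc i (g 0) * M i j :=
          Finset.sum_le_sum fun j _ => hosc_step 0 j
      _ = ∑ i, osc i f * ∑ j, M i j := by
          rw [Finset.sum_comm]
          exact Finset.sum_congr rfl fun i _ => by rw [hg0, Finset.mul_sum]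
      _ ≤ ∑ i, osc i f * rowNorm M :=
          Finset.sum_le_sum fun i _ => mul_le_mul_of_nonneg_left (hrowle i) (hoscf_nn i)
      _ = rowNorm M * ∑ i, osc i f := by rw [← Finset.sum_mul]; ring
  -- the coupling estimate
  letI := upgradeStandardBorel X
  have hS : ∀ j : Fin n, MeasurableSet {q : (Fin n → X) × (Fin n → X) | q.1 j ≠ q.2 j} := by
    intro j
    have h1 : Measurable fun q : (Fin n → X) × (Fin n → X) => q.1 j :=
      (measurable_pi_apply j).comp measurable_fst
    have h2 : Measurable fun q : (Fin n → X) × (Fin n → X) => q.2 j :=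
      (measurable_pi_apply j).comp measurable_snd
    exact (h1.stronglyMeasurable.measurableSet_eq_fun h2.stronglyMeasurable).compl
  obtain ⟨r0, rfl⟩ : ∃ r0, k = r0 + 1 := ⟨k - 1, (Nat.succ_pred_eq_of_pos hk).symm⟩
  set gk := g (r0 + 1) with hgk
  have hgkm : Measurable gk := (hgprop (r0 + 1)).1
  have hgkb : ∀ x, |gk x| ≤ C := (hgprop (r0 + 1)).2
  have hint1 : Integrable (fun q : (Fin n → X) × (Fin n → X) => gk q.1) Ψ :=
    RvH_integrable_of_bdd ((hgkm.comp measurable_fst).aestronglyMeasurable)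
      (fun q => hgkb q.1)
  have hint2 : Integrable (fun q : (Fin n → X) × (Fin n → X) => gk q.2) Ψ :=
    RvH_integrable_of_bdd ((hgkm.comp measurable_snd).aestronglyMeasurable)
      (fun q => hgkb q.2)
  have hsub : (∫ x, gk x ∂μ) - ∫ x, gk x ∂ν = ∫ q, (gk q.1 - gk q.2) ∂Ψ := by
    rw [← hΨ.1, ← hΨ.2, integral_map measurable_fst.aemeasurable hgkm.aestronglyMeasurable,
      integral_map measurable_snd.aemeasurable hgkm.aestronglyMeasurable,
      ← integral_sub hint1 hint2]
  set bound : (Fin n → X) × (Fin n → X) → ℝ := fun q =>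
    ∑ j, Set.indicator {q' : (Fin n → X) × (Fin n → X) | q'.1 j ≠ q'.2 j}
      (fun _ => osc j gk) q with hbound
  have hboundint : Integrable bound Ψ := by
    refine integrable_finset_sum _ fun j _ => ?_
    exact (integrable_const (osc j gk)).indicator (hS j)
  have hptwise : ∀ q : (Fin n → X) × (Fin n → X), |gk q.1 - gk q.2| ≤ bound q := by
    intro q
    refine le_trans (RvH_telescope gk hgkb q.1 q.2) (le_of_eq ?_)
    refine Finset.sum_congr rfl fun j _ => ?_
    by_cases h : q.1 j = q.2 j
    · rw [if_pos h, mul_zero, Set.indicator_of_notMem (by simpa using h)]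
    · rw [if_neg h, mul_one, Set.indicator_of_mem (by simpa using h)]
  have hbound_eq : ∫ q, bound q ∂Ψ
      = ∑ j, osc j gk * (Ψ {q : (Fin n → X) × (Fin n → X) | q.1 j ≠ q.2 j}).toReal := by
    rw [hbound, integral_finset_sum _ fun j _ => (integrable_const (osc j gk)).indicator (hS j)]
    refine Finset.sum_congr rfl fun j _ => ?_
    rw [integral_indicator_const _ (hS j)]
    simp [mul_comm, Measure.real]
  have hcoup : |(∫ x, gk x ∂μ) - ∫ x, gk x ∂ν|
      ≤ ∑ j, osc j gk * (Ψ {q : (Fin n → X) × (Fin n → X) | q.1 j ≠ q.2 j}).toReal := by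
    rw [hsub, ← hbound_eq]
    calc |∫ q, (gk q.1 - gk q.2) ∂Ψ| = ‖∫ q, (gk q.1 - gk q.2) ∂Ψ‖ := by
          rw [Real.norm_eq_abs]
      _ ≤ ∫ q, ‖gk q.1 - gk q.2‖ ∂Ψ := norm_integral_le_integral_norm _
      _ ≤ ∫ q, bound q ∂Ψ := by
          refine integral_mono ((hint1.sub hint2).norm) hboundint ?_
          intro q
          simpa [Real.norm_eq_abs] using hptwise q
  -- the supremum over coupling probabilities
  set sΨ := ⨆ j : Fin n, (Ψ {q : (Fin n → X) × (Fin n → X) | q.1 j ≠ q.2 j}).toReal with hsΨ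
  have hsΨnn : 0 ≤ sΨ := Real.iSup_nonneg fun j => ENNReal.toReal_nonneg
  have hΨle : ∀ j, (Ψ {q : (Fin n → X) × (Fin n → X) | q.1 j ≠ q.2 j}).toReal ≤ sΨ :=
    fun j => le_ciSup
      (f := fun j : Fin n => (Ψ {q : (Fin n → X) × (Fin n → X) | q.1 j ≠ q.2 j}).toReal)
      (Set.Finite.bddAbove (Set.finite_range _)) j
  have hchain : ∑ j, osc j gk * (Ψ {q : (Fin n → X) × (Fin n → X) | q.1 j ≠ q.2 j}).toReal
      ≤ sΨ * (lam ^ r0 * (rowNorm M * ∑ i, osc i f)) := by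
    calc ∑ j, osc j gk * (Ψ {q : (Fin n → X) × (Fin n → X) | q.1 j ≠ q.2 j}).toReal
        ≤ ∑ j, osc j gk * sΨ :=
          Finset.sum_le_sum fun j _ => mul_le_mul_of_nonneg_left (hΨle j) (hoscnn (r0 + 1) j)
      _ = sΨ * ∑ j, osc j gk := by rw [← Finset.sum_mul]; ring
      _ ≤ sΨ * (lam ^ r0 * ∑ j, osc j (g 1)) :=
          mul_le_mul_of_nonneg_left (hiter r0) hsΨnn
      _ ≤ sΨ * (lam ^ r0 * (rowNorm M * ∑ i, osc i f)) := by
          refine mul_le_mul_of_nonneg_left ?_ hsΨnn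
          exact mul_le_mul_of_nonneg_left hfirst (pow_nonneg hlam0 r0)
  have hfinal := le_trans hcoup hchain
  have hk1 : r0 + 1 - 1 = r0 := rfl
  calc |(∫ x, (∫ y, f y ∂(kpow PP (r0 + 1) x)) ∂μ) -
        ∫ x, (∫ y, f y ∂(kpow PP (r0 + 1) x)) ∂ν|
      = |(∫ x, gk x ∂μ) - ∫ x, gk x ∂ν| := rfl
    _ ≤ sΨ * (lam ^ r0 * (rowNorm M * ∑ i, osc i f)) := hfinal
    _ = rowNorm M * lam ^ (r0 + 1 - 1) * sΨ * ∑ i, osc i f := by rw [hk1]; ring
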